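/- Let n ∈ ℕ, let X ∈ {0,1}^{n×2^n} be the matrix whose column x_j (for j = 0, 1, …, 2^n − 1) contains the binary digits of j, i.e., x_{ℓ,j} ∈ {0,1} with j = Σ_{ℓ=1}^n x_{ℓ,j} 2^{ℓ−1}, and set K = X^T X. Then for every positive integer d, the rank of the d-th Hadamard power K^∘d equals Σ_{p=1}^d binom(n, p) if d ≤ n, and equals 2^n − 1 if d ≥ n. -/

import Mathlib

open Finset Matrix

private def auxS (n : ℕ) (j : Fin (2 ^ n)) : Finset (Fin n) :=
  Finset.univ.filter fun ℓ => (j : ℕ).testBit (ℓ : ℕ)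

private lemma mem_auxS {n : ℕ} {j : Fin (2 ^ n)} {ℓ : Fin n} :
    ℓ ∈ auxS n j ↔ (j : ℕ).testBit (ℓ : ℕ) := by simp [auxS]

private lemma auxS_inj {n : ℕ} : Function.Injective (auxS n) := by
  intro i j h
  ext
  apply Nat.eq_of_testBit_eq
  intro ℓ
  by_cases hℓ : ℓ < n
  · have := Finset.ext_iff.1 h ⟨ℓ, hℓ⟩
    simpa [mem_auxS] using this
  · have h1 : (i : ℕ).testBit ℓ = false :=
      Nat.testBit_eq_false_of_lt (lt_of_lt_of_le i.2 (Nat.pow_le_pow_right (by norm_num) (le_of_not_gt hℓ)))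
    have h2 : (j : ℕ).testBit ℓ = false :=
      Nat.testBit_eq_false_of_lt (lt_of_lt_of_le j.2 (Nat.pow_le_pow_right (by norm_num) (le_of_not_gt hℓ)))
    rw [h1, h2]

private lemma auxS_bij {n : ℕ} : Function.Bijective (auxS n) := by
  rw [Fintype.bijective_iff_injective_and_card]
  exact ⟨auxS_inj, by simp⟩

private lemma auxS_le {n : ℕ} {i j : Fin (2 ^ n)} (h : auxS n j ⊆ auxS n i) : j ≤ i := by
  have key : (i : ℕ) &&& (j : ℕ) = (j : ℕ) := by
    apply Nat.eq_of_testBit_eq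
    intro ℓ
    rw [Nat.testBit_land]
    by_cases hj : (j : ℕ).testBit ℓ
    · by_cases hℓ : ℓ < n
      · have : (i : ℕ).testBit ℓ := mem_auxS.1 (h (mem_auxS.2 (by exact hj) : (⟨ℓ, hℓ⟩ : Fin n) ∈ auxS n j))
        simp [hj, this]
      · exact absurd hj (by
          simp [Nat.testBit_eq_false_of_lt (lt_of_lt_of_le j.2 (Nat.pow_le_pow_right (by norm_num) (le_of_not_gt hℓ)))])
    · simp [Bool.eq_false_iff.2 hj]
  have : (j : ℕ) ≤ (i : ℕ) := key ▸ Nat.and_le_left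
  exact this

private def auxC (n d : ℕ) (σ : Finset (Fin n)) : ℕ :=
  (Finset.univ.filter fun f : Fin d → Fin n => Finset.image f Finset.univ = σ).card

private lemma auxCount (n d : ℕ) (A : Finset (Fin n)) :
    A.card ^ d = ∑ σ : Finset (Fin n), auxC n d σ * (if σ ⊆ A then 1 else 0) := by
  classical
  have h1 : (Fintype.piFinset fun _ : Fin d => A).card = A.card ^ d := by
    simp [Fintype.card_piFinset]
  have h2 : (Fintype.piFinset fun _ : Fin d => A).card =
      ∑ σ ∈ A.powerset, ((Fintype.piFinset fun _ : Fin d => A).filter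
        fun f => Finset.image f Finset.univ = σ).card := by
    apply Finset.card_eq_sum_card_fiberwise
    intro f hf
    rw [Finset.mem_coe, Finset.mem_powerset]
    intro x hx
    obtain ⟨k, _, rfl⟩ := Finset.mem_image.1 hx
    exact Fintype.mem_piFinset.1 hf k
  have h3 : ∀ σ ∈ A.powerset, ((Fintype.piFinset fun _ : Fin d => A).filter
      fun f => Finset.image f Finset.univ = σ).card = auxC n d σ := by
    intro σ hσ
    rw [Finset.mem_powerset] at hσ
    congr 1
    ext f
    simp only [Finset.mem_filter, Fintype.mem_piFinset, Finset.mem_univ, true_and]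
    constructor
    · rintro ⟨-, h⟩; exact h
    · rintro h
      refine ⟨fun k => hσ (h ▸ Finset.mem_image_of_mem f (Finset.mem_univ k)), h⟩
  have h4 : ∑ σ : Finset (Fin n), auxC n d σ * (if σ ⊆ A then 1 else 0)
      = ∑ σ ∈ A.powerset, auxC n d σ := by
    rw [Finset.sum_congr rfl (fun σ _ => by rw [mul_ite, mul_one, mul_zero]),
      ← Finset.sum_filter]
    congr 1
    ext σ
    simp [Finset.mem_powerset]
  rw [h4, ← h1, h2]
  exact Finset.sum_congr rfl h3

private lemma auxC_ne_zero {n d : ℕ} (hd : 0 < d) (σ : Finset (Fin n)) :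
    auxC n d σ ≠ 0 ↔ σ.Nonempty ∧ σ.card ≤ d := by
  classical
  constructor
  · intro h
    obtain ⟨f, hf⟩ := Finset.card_ne_zero.1 h
    rw [Finset.mem_filter] at hf
    obtain ⟨-, hf⟩ := hf
    subst hf
    constructor
    · have : (Finset.univ : Finset (Fin d)).Nonempty := ⟨⟨0, hd⟩, Finset.mem_univ _⟩
      exact this.image f
    · calc (Finset.image f Finset.univ).card ≤ (Finset.univ : Finset (Fin d)).card :=
            Finset.card_image_le
        _ = d := by simp
  · rintro ⟨hne, hle⟩
    have hc : 0 < σ.card := Finset.card_pos.2 hne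
    set g := σ.orderEmbOfFin (k := σ.card) rfl with hg
    have hrange : ∀ x ∈ σ, ∃ i : Fin σ.card, g i = x := by
      intro x hx
      have := σ.range_orderEmbOfFin (k := σ.card) rfl
      rw [Set.ext_iff] at this
      exact (this x).2 hx
    set f : Fin d → Fin n := fun k => g ⟨(k : ℕ) % σ.card, Nat.mod_lt _ hc⟩ with hfdef
    apply Finset.card_ne_zero.2
    refine ⟨f, Finset.mem_filter.2 ⟨Finset.mem_univ _, ?_⟩⟩
    ext x
    simp only [Finset.mem_image, Finset.mem_univ, true_and]
    constructor
    · rintro ⟨k, rfl⟩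
      exact σ.orderEmbOfFin_mem rfl _
    · intro hx
      obtain ⟨i, rfl⟩ := hrange x hx
      refine ⟨⟨(i : ℕ), lt_of_lt_of_le i.2 hle⟩, ?_⟩
      simp only [hfdef]
      congr 1
      ext
      simp [Nat.mod_eq_of_lt i.2]

private def auxz (n : ℕ) (σ : Finset (Fin n)) : Fin (2 ^ n) → ℝ := fun i =>
  if σ ⊆ auxS n i then 1 else 0

private def auxZ (n : ℕ) : Matrix (Fin (2 ^ n)) (Fin (2 ^ n)) ℝ :=
  Matrix.of fun i j => auxz n (auxS n j) i

private lemma auxZ_isUnit (n : ℕ) : IsUnit (auxZ n) := by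
  rw [Matrix.isUnit_iff_isUnit_det]
  have hdet : (auxZ n).det = 1 := by
    rw [Matrix.det_of_lowerTriangular]
    · have : ∀ i : Fin (2 ^ n), auxZ n i i = 1 := by
        intro i; simp [auxZ, auxz]
      simp [this]
    · intro i j hij
      simp only [OrderDual.toDual_lt_toDual] at hij
      simp only [auxZ, auxz, Matrix.of_apply, ite_eq_right_iff]
      intro hsub
      exact absurd (auxS_le hsub) (not_le.2 hij)
  rw [hdet]; exact isUnit_one

private lemma auxz_li (n : ℕ) : LinearIndependent ℝ (auxz n) := by
  have h1 : LinearIndependent ℝ (fun j => (auxZ n)ᵀ j) :=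
    Matrix.linearIndependent_cols_iff_isUnit.2 (auxZ_isUnit n)
  have heq : ∀ j, (auxZ n)ᵀ j = auxz n (auxS n j) := by
    intro j; funext i; rfl
  set e : Fin (2 ^ n) ≃ Finset (Fin n) := Equiv.ofBijective _ auxS_bij with he
  have h2 := h1.comp e.symm e.symm.injective
  have : auxz n = (fun j => (auxZ n)ᵀ j) ∘ e.symm := by
    funext σ
    simp only [Function.comp_apply, heq]
    exact congrArg (auxz n) (e.apply_symm_apply σ).symm
  rw [this]
  exact h2

private lemma auxSupp_card (n d : ℕ) :
    (Finset.univ.filter fun σ : Finset (Fin n) => σ.Nonempty ∧ σ.card ≤ d).card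
      = ∑ p ∈ Finset.Icc 1 d, n.choose p := by
  classical
  rw [Finset.card_eq_sum_card_fiberwise (f := Finset.card) (t := Finset.Icc 1 d)
    (by intro σ hσ
        rw [Finset.mem_coe, Finset.mem_filter] at hσ
        exact Finset.mem_Icc.2 ⟨Finset.card_pos.2 hσ.2.1, hσ.2.2⟩)]
  refine Finset.sum_congr rfl fun p hp => ?_
  rw [Finset.mem_Icc] at hp
  have : ((Finset.univ.filter fun σ : Finset (Fin n) => σ.Nonempty ∧ σ.card ≤ d).filter
      fun σ => σ.card = p) = Finset.powersetCard p Finset.univ := by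
    ext σ
    simp only [Finset.mem_filter, Finset.mem_univ, true_and, Finset.mem_powersetCard_univ]
    constructor
    · rintro ⟨-, h⟩; exact h
    · intro h
      exact ⟨⟨Finset.card_pos.1 (h ▸ hp.1), h ▸ hp.2⟩, h⟩
  rw [this, Finset.card_powersetCard]
  simp

private lemma auxSum_ge (n d : ℕ) (hnd : n ≤ d) :
    ∑ p ∈ Finset.Icc 1 d, n.choose p = 2 ^ n - 1 := by
  have hsub : Finset.Icc 1 n ⊆ Finset.Icc 1 d := Finset.Icc_subset_Icc_right hnd
  have h0 : ∑ p ∈ Finset.Icc 1 d, n.choose p = ∑ p ∈ Finset.Icc 1 n, n.choose p := by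
    symm
    apply Finset.sum_subset hsub
    intro p hp hnp
    rw [Finset.mem_Icc] at hp hnp
    exact Nat.choose_eq_zero_of_lt (by omega)
  have h1 : ∑ p ∈ Finset.range (n + 1), n.choose p = 2 ^ n := Nat.sum_range_choose n
  rw [Finset.range_eq_Ico, Finset.sum_eq_sum_Ico_succ_bot (by omega),
    Finset.Ico_add_one_right_eq_Icc, Nat.choose_zero_right, zero_add] at h1
  rw [h0]
  obtain ⟨m, hm⟩ : ∃ m, 2 ^ n = m := ⟨_, rfl⟩
  rw [hm] at h1 ⊢
  omega

/-- Let `X ∈ {0,1}^{n×2^n}` be the matrix whose `j`-th column contains the binary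
digits of `j` (the entry in row `ℓ` being the bit of `j` of weight `2^ℓ`, rows indexed from `0`),
and set `K = Xᵀ X`. Then for every positive integer `d`, the rank of the `d`-th Hadamard power
`K^∘d` equals `Σ_{p=1}^d binom(n,p)` if `d ≤ n`, and equals `2^n − 1` if `d ≥ n`. -/
theorem rank_hadamard_power_boolean_gram (n : ℕ)
    (X : Matrix (Fin n) (Fin (2 ^ n)) ℝ)
    (hX : ∀ ℓ j, X ℓ j = if Nat.testBit (j : ℕ) (ℓ : ℕ) then 1 else 0)
    (K : Matrix (Fin (2 ^ n)) (Fin (2 ^ n)) ℝ) (hK : K = X.transpose * X)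
    (d : ℕ) (hd : 0 < d) :
    (d ≤ n → (Matrix.of fun i j => K i j ^ d).rank = ∑ p ∈ Finset.Icc 1 d, n.choose p) ∧
    (n ≤ d → (Matrix.of fun i j => K i j ^ d).rank = 2 ^ n - 1) := by
  classical
  have hKent : ∀ i j, K i j = ((auxS n i ∩ auxS n j).card : ℝ) := by
    intro i j
    rw [hK]
    simp only [Matrix.mul_apply, Matrix.transpose_apply, hX]
    have : (auxS n i ∩ auxS n j) =
        Finset.univ.filter (fun ℓ : Fin n => (i : ℕ).testBit ℓ ∧ (j : ℕ).testBit ℓ) := by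
      ext ℓ
      simp [auxS]
    rw [this, Finset.card_filter]
    push_cast
    refine Finset.sum_congr rfl fun ℓ _ => ?_
    by_cases h1 : (i : ℕ).testBit ℓ <;> by_cases h2 : (j : ℕ).testBit ℓ <;> simp [h1, h2]
  set B : Matrix (Fin (2 ^ n)) (Finset (Fin n)) ℝ :=
    Matrix.of fun i σ => Real.sqrt (auxC n d σ) * auxz n σ i with hB
  have hBcol : ∀ σ, Bᵀ σ = Real.sqrt (auxC n d σ) • auxz n σ := by
    intro σ; funext i
    simp [hB, Matrix.transpose_apply]
  have hfact : (Matrix.of fun i j => K i j ^ d) = B * Bᵀ := by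
    ext i j
    simp only [Matrix.mul_apply, Matrix.of_apply, Matrix.transpose_apply, hB]
    rw [hKent]
    have hterm : ∀ σ : Finset (Fin n),
        (Real.sqrt (auxC n d σ) * auxz n σ i) * (Real.sqrt (auxC n d σ) * auxz n σ j)
          = (auxC n d σ : ℝ) * (if σ ⊆ auxS n i ∩ auxS n j then 1 else 0) := by
      intro σ
      have hs : Real.sqrt (auxC n d σ) * Real.sqrt (auxC n d σ) = (auxC n d σ : ℝ) :=
        Real.mul_self_sqrt (by positivity)
      rw [show (Real.sqrt (auxC n d σ) * auxz n σ i) * (Real.sqrt (auxC n d σ) * auxz n σ j)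
          = (Real.sqrt (auxC n d σ) * Real.sqrt (auxC n d σ)) * (auxz n σ i * auxz n σ j) by
        ring, hs]
      congr 1
      simp only [auxz, Finset.subset_inter_iff]
      by_cases h1 : σ ⊆ auxS n i <;> by_cases h2 : σ ⊆ auxS n j <;> simp [h1, h2]
    rw [Finset.sum_congr rfl fun σ _ => hterm σ]
    have hcnt := auxCount n d (auxS n i ∩ auxS n j)
    have : (((auxS n i ∩ auxS n j).card : ℝ)) ^ d
        = (((auxS n i ∩ auxS n j).card ^ d : ℕ) : ℝ) := by push_cast; ring
    rw [this, hcnt]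
    push_cast
    ring
  set supp : Finset (Finset (Fin n)) :=
    Finset.univ.filter (fun σ => σ.Nonempty ∧ σ.card ≤ d) with hsupp
  have hrank : (Matrix.of fun i j => K i j ^ d).rank = ∑ p ∈ Finset.Icc 1 d, n.choose p := by
    rw [hfact, Matrix.rank_self_mul_transpose, Matrix.rank_eq_finrank_span_cols]
    have hspan : Submodule.span ℝ (Set.range Bᵀ)
        = Submodule.span ℝ (↑(supp.image (auxz n)) : Set (Fin (2 ^ n) → ℝ)) := by
      apply le_antisymm
      · rw [Submodule.span_le]
        rintro - ⟨σ, rfl⟩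
        by_cases hc : auxC n d σ = 0
        · rw [hBcol, hc]
          simp
        · have hmem : σ ∈ supp := by
            rw [hsupp, Finset.mem_filter]
            exact ⟨Finset.mem_univ _, (auxC_ne_zero hd σ).1 hc⟩
          rw [hBcol]
          exact Submodule.smul_mem _ _ (Submodule.subset_span
            (by simp only [Finset.coe_image, Set.mem_image, Finset.mem_coe]
                exact ⟨σ, hmem, rfl⟩))
      · rw [Submodule.span_le]
        intro x h
        simp only [Finset.coe_image, Set.mem_image, Finset.mem_coe] at h
        obtain ⟨σ, hσ, rfl⟩ := h
        have hc : auxC n d σ ≠ 0 := by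
          rw [hsupp, Finset.mem_filter] at hσ
          exact (auxC_ne_zero hd σ).2 hσ.2
        have hs : Real.sqrt (auxC n d σ) ≠ 0 := by
          rw [Real.sqrt_ne_zero']
          exact_mod_cast Nat.pos_of_ne_zero hc
        have : auxz n σ = (Real.sqrt (auxC n d σ))⁻¹ • Bᵀ σ := by
          rw [hBcol, smul_smul, inv_mul_cancel₀ hs, one_smul]
        rw [this]
        exact Submodule.smul_mem _ _ (Submodule.subset_span (Set.mem_range_self σ))
    have hinj : Function.Injective (auxz n) := (auxz_li n).injective
    have hli : LinearIndependent ℝ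
        (Subtype.val : (↑(supp.image (auxz n)) : Set (Fin (2 ^ n) → ℝ)) → _) := by
      apply LinearIndepOn.mono (v := id) (s := Set.range (auxz n))
      swap
      · intro x hx
        simp only [Finset.coe_image, Set.mem_image, Finset.mem_coe] at hx
        obtain ⟨σ, -, rfl⟩ := hx
        exact Set.mem_range_self σ
      · exact (linearIndepOn_id_range_iff (auxz_li n).injective).2 (auxz_li n)
    rw [show B.col = Bᵀ from rfl, hspan, finrank_span_set_eq_card hli]
    rw [Finset.toFinset_coe, Finset.card_image_of_injective _ hinj]
    exact auxSupp_card n d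
  exact ⟨fun _ => hrank, fun hnd => by rw [hrank, auxSum_ge n d hnd]⟩
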